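/- arXiv:0901.0759 — 5 statements merged into one kernel-verified Lean document; each statement's English description precedes it below -/
import Mathlib

section
/- For every involution α of ZMod 7 (a permutation with α ∘ α = id) there exists i ∈ ZMod 7 such that every orbit of the action on ZMod 7 of the subgroup of permutations generated by α and τ_i contains a point that is fixed by α or fixed by τ_i. -/
/-- For `i : ZMod n`, the permutation `τ_i` of `ZMod n` that swaps `i` with `i+5`,
`i+1` with `i+3`, `i+2` with `i+4`, and fixes every other element (the three
transpositions are disjoint as soon as `n ≥ 7`). -/
def tau {n : ℕ} (i : ZMod n) : Equiv.Perm (ZMod n) :=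
  Equiv.swap i (i + 5) * Equiv.swap (i + 1) (i + 3) * Equiv.swap (i + 2) (i + 4)

/-- One step of the reachability computation: a point is marked if it, its image
under `a`, or its image under `t` was already marked. -/
def stepB (a t : ZMod 7 → ZMod 7) (s : ZMod 7 → Bool) : ZMod 7 → Bool :=
  fun y => s y || s (a y) || s (t y)

/-- Points from which a fixed point of `a` or `t` is reachable in at most 3 steps. -/
def reachB (a t : ZMod 7 → ZMod 7) : ZMod 7 → Bool :=
  (stepB a t)^[3] (fun y => decide (a y = y ∨ t y = y))

/-- The function `ZMod 7 → ZMod 7` given by a list of seven values. -/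
def vecf (a0 a1 a2 a3 a4 a5 a6 : ZMod 7) : ZMod 7 → ZMod 7 :=
  fun x => [a0, a1, a2, a3, a4, a5, a6].getD x.val 0

/-- Lookup-table version of `tau` on `ZMod 7`. -/
def tauT (i : ZMod 7) : ZMod 7 → ZMod 7 :=
  fun x =>
    ([[5, 3, 4, 1, 2, 0, 6], [0, 6, 4, 5, 2, 3, 1], [2, 1, 0, 5, 6, 3, 4],
      [5, 3, 2, 1, 6, 0, 4], [5, 6, 4, 3, 2, 0, 1], [2, 6, 0, 5, 4, 3, 1],
      [2, 3, 0, 1, 6, 5, 4]].getD i.val []).getD x.val 0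

lemma tauT_eq (i : ZMod 7) : tauT i = ⇑(tau i) := by
  revert i; decide

lemma stepB_spec (a t : Equiv.Perm (ZMod 7))
    (ha : a ∈ Subgroup.closure ({a, t} : Set (Equiv.Perm (ZMod 7))))
    (ht : t ∈ Subgroup.closure ({a, t} : Set (Equiv.Perm (ZMod 7))))
    (n : ℕ) :
    ∀ s : ZMod 7 → Bool,
      (∀ y, s y = true →
        ∃ z ∈ MulAction.orbit (Subgroup.closure {a, t} : Subgroup (Equiv.Perm (ZMod 7))) y,
          a z = z ∨ t z = z) →
      ∀ y, (stepB (⇑a) (⇑t))^[n] s y = true →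
        ∃ z ∈ MulAction.orbit (Subgroup.closure {a, t} : Subgroup (Equiv.Perm (ZMod 7))) y,
          a z = z ∨ t z = z := by
  induction n with
  | zero => intro s hs y hy; exact hs y hy
  | succ n ih =>
    intro s hs y hy
    rw [Function.iterate_succ_apply] at hy
    refine ih (stepB (⇑a) (⇑t) s) ?_ y hy
    intro y hy
    simp only [stepB, Bool.or_eq_true] at hy
    rcases hy with (hy | hy) | hy
    · exact hs y hy
    · obtain ⟨z, hz, hfix⟩ := hs (a y) hy
      refine ⟨z, ?_, hfix⟩
      have : a y = (⟨a, ha⟩ : Subgroup.closure ({a, t} : Set (Equiv.Perm (ZMod 7)))) • y := rfl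
      rwa [this, MulAction.orbit_smul] at hz
    · obtain ⟨z, hz, hfix⟩ := hs (t y) hy
      refine ⟨z, ?_, hfix⟩
      have : t y = (⟨t, ht⟩ : Subgroup.closure ({a, t} : Set (Equiv.Perm (ZMod 7)))) • y := rfl
      rwa [this, MulAction.orbit_smul] at hz

set_option maxRecDepth 40000 in
set_option synthInstance.maxHeartbeats 1000000 in
set_option synthInstance.maxSize 5000 in
set_option maxHeartbeats 4000000 in
lemma key : ∀ a0 a1 a2 a3 : ZMod 7,
    (((a0.val != 1 || a1.val == 0) = true) ∧
     ((a0.val != 2 || a2.val == 0) = true) ∧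
     ((a0.val != 3 || a3.val == 0) = true) ∧
     ((a1.val != 0 || a0.val == 1) = true) ∧
     ((a1.val != 2 || a2.val == 1) = true) ∧
     ((a1.val != 3 || a3.val == 1) = true) ∧
     ((a2.val != 0 || a0.val == 2) = true) ∧
     ((a2.val != 1 || a1.val == 2) = true) ∧
     ((a2.val != 3 || a3.val == 2) = true) ∧
     ((a3.val != 0 || a0.val == 3) = true) ∧
     ((a3.val != 1 || a1.val == 3) = true) ∧
     ((a3.val != 2 || a2.val == 3) = true)) →
    ∀ a4 a5 : ZMod 7,
    (((a0.val != 4 || a4.val == 0) = true) ∧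
     ((a0.val != 5 || a5.val == 0) = true) ∧
     ((a1.val != 4 || a4.val == 1) = true) ∧
     ((a1.val != 5 || a5.val == 1) = true) ∧
     ((a2.val != 4 || a4.val == 2) = true) ∧
     ((a2.val != 5 || a5.val == 2) = true) ∧
     ((a3.val != 4 || a4.val == 3) = true) ∧
     ((a3.val != 5 || a5.val == 3) = true) ∧
     ((a4.val != 0 || a0.val == 4) = true) ∧
     ((a4.val != 1 || a1.val == 4) = true) ∧
     ((a4.val != 2 || a2.val == 4) = true) ∧
     ((a4.val != 3 || a3.val == 4) = true) ∧
     ((a4.val != 5 || a5.val == 4) = true) ∧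
     ((a5.val != 0 || a0.val == 5) = true) ∧
     ((a5.val != 1 || a1.val == 5) = true) ∧
     ((a5.val != 2 || a2.val == 5) = true) ∧
     ((a5.val != 3 || a3.val == 5) = true) ∧
     ((a5.val != 4 || a4.val == 5) = true)) →
    ∀ a6 : ZMod 7,
    ((((vecf a0 a1 a2 a3 a4 a5 a6 (vecf a0 a1 a2 a3 a4 a5 a6 0)).val == 0) = true) ∧
     (((vecf a0 a1 a2 a3 a4 a5 a6 (vecf a0 a1 a2 a3 a4 a5 a6 1)).val == 1) = true) ∧
     (((vecf a0 a1 a2 a3 a4 a5 a6 (vecf a0 a1 a2 a3 a4 a5 a6 2)).val == 2) = true) ∧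
     (((vecf a0 a1 a2 a3 a4 a5 a6 (vecf a0 a1 a2 a3 a4 a5 a6 3)).val == 3) = true) ∧
     (((vecf a0 a1 a2 a3 a4 a5 a6 (vecf a0 a1 a2 a3 a4 a5 a6 4)).val == 4) = true) ∧
     (((vecf a0 a1 a2 a3 a4 a5 a6 (vecf a0 a1 a2 a3 a4 a5 a6 5)).val == 5) = true) ∧
     (((vecf a0 a1 a2 a3 a4 a5 a6 (vecf a0 a1 a2 a3 a4 a5 a6 6)).val == 6) = true)) →
    ∃ i : ZMod 7, ∀ x, reachB (vecf a0 a1 a2 a3 a4 a5 a6) (tauT i) x = true := by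
  decide +kernel

/-- For every involution `α` of `ZMod 7` there exists `i` such that every orbit of the
subgroup generated by `α` and `τ_i` contains a point fixed by `α` or fixed by `τ_i`. -/
theorem exists_tau_orbits_with_fixed_points_seven
    (α : Equiv.Perm (ZMod 7)) (hα : ∀ x, α (α x) = x) :
    ∃ i : ZMod 7, ∀ x : ZMod 7,
      ∃ y ∈ MulAction.orbit (Subgroup.closure {α, tau i} : Subgroup (Equiv.Perm (ZMod 7))) x,
        α y = y ∨ tau i y = y := by
  have hv : vecf (α 0) (α 1) (α 2) (α 3) (α 4) (α 5) (α 6) = ⇑α := by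
    funext x
    fin_cases x <;> rfl
  have hpair : ∀ x y : ZMod 7, α x = y → α y = x := by
    intro x y h; rw [← h]; exact hα x
  have hp : ∀ x y : ZMod 7, ((α x).val != y.val || (α y).val == x.val) = true := by
    intro x y
    by_cases h : α x = y
    · have h2 := hpair x y h
      simp [h2]
    · have h3 : (α x).val ≠ y.val := fun hv => h (ZMod.val_injective 7 hv)
      simp [h3]
  obtain ⟨i, hi⟩ := key (α 0) (α 1) (α 2) (α 3)
    ⟨hp 0 1, hp 0 2, hp 0 3, hp 1 0, hp 1 2, hp 1 3, hp 2 0, hp 2 1, hp 2 3, hp 3 0, hp 3 1, hp 3 2⟩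
    (α 4) (α 5)
    ⟨hp 0 4, hp 0 5, hp 1 4, hp 1 5, hp 2 4, hp 2 5, hp 3 4, hp 3 5, hp 4 0, hp 4 1, hp 4 2, hp 4 3, hp 4 5, hp 5 0, hp 5 1, hp 5 2, hp 5 3, hp 5 4⟩
    (α 6)
    (by rw [hv]; exact ⟨(by rw [hα 0]; rfl), (by rw [hα 1]; rfl), (by rw [hα 2]; rfl), (by rw [hα 3]; rfl), (by rw [hα 4]; rfl), (by rw [hα 5]; rfl), (by rw [hα 6]; rfl)⟩)
  rw [tauT_eq, hv] at hi
  refine ⟨i, fun x => ?_⟩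
  have ha : α ∈ Subgroup.closure ({α, tau i} : Set (Equiv.Perm (ZMod 7))) :=
    Subgroup.subset_closure (Set.mem_insert _ _)
  have ht : tau i ∈ Subgroup.closure ({α, tau i} : Set (Equiv.Perm (ZMod 7))) :=
    Subgroup.subset_closure (Set.mem_insert_of_mem _ rfl)
  refine stepB_spec α (tau i) ha ht 3 _ ?_ x (hi x)
  intro y hy
  exact ⟨y, MulAction.mem_orbit_self y, of_decide_eq_true hy⟩
end

section
/- Let n be an odd integer with n ≥ 7. For every involution α of ZMod n (a permutation with α ∘ α = id) there exists i ∈ ZMod n such that every orbit of the action on ZMod n of the subgroup of permutations generated by α and τ_i contains a point that is fixed by α or fixed by τ_i. -/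
section
variable {n : ℕ}

lemma dne (hn : 7 ≤ n) (hodd : Odd n) {u v : ZMod n} (d : ℤ) (hd : u - v = (d : ZMod n))
    (hc : d ≠ 0 ∧ d ≠ 7 ∧ d ≠ -7 ∧ d < 9 ∧ -9 < d) : u ≠ v := by
  obtain ⟨h0, h7, h7', h9, h9'⟩ := hc
  intro h
  have hd0 : ((d : ℤ) : ZMod n) = 0 := by rw [← hd, h, sub_self]
  rw [ZMod.intCast_zmod_eq_zero_iff_dvd] at hd0
  have hle : (n : ℤ) ≤ |d| := Int.le_of_dvd (abs_pos.mpr h0) ((dvd_abs _ _).mpr hd0)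
  obtain ⟨k, hk⟩ := hodd
  have hn7 : n = 7 := by rcases abs_cases d with ⟨h,_⟩|⟨h,_⟩ <;> omega
  subst hn7
  obtain ⟨c, hc⟩ := hd0
  omega

lemma tau_fix (i y : ZMod n) (h0 : y ≠ i) (h5 : y ≠ i+5) (h1 : y ≠ i+1) (h3 : y ≠ i+3)
    (h2 : y ≠ i+2) (h4 : y ≠ i+4) : tau i y = y := by
  unfold tau
  simp only [Equiv.Perm.mul_apply]
  rw [Equiv.swap_apply_of_ne_of_ne h2 h4, Equiv.swap_apply_of_ne_of_ne h1 h3,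
      Equiv.swap_apply_of_ne_of_ne h0 h5]

lemma tau_ne_cases {i y : ZMod n} (h : tau i y ≠ y) :
    y = i ∨ y = i + 5 ∨ y = i + 1 ∨ y = i + 3 ∨ y = i + 2 ∨ y = i + 4 := by
  by_contra hc
  push_neg at hc
  obtain ⟨h0, h5, h1, h3, h2, h4⟩ := hc
  exact h (tau_fix i y h0 h5 h1 h3 h2 h4)

lemma tau_spec (hn : 7 ≤ n) (hodd : Odd n) (i : ZMod n) :
    tau i i = i + 5 ∧ tau i (i+5) = i ∧ tau i (i+1) = i+3 ∧ tau i (i+3) = i+1 ∧ tau i (i+2) = i+4 ∧ tau i (i+4) = i+2 := by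
  have ne01 : i ≠ (i + 1) := dne hn hodd (-1) (by push_cast; ring) (by norm_num)
  have ne02 : i ≠ (i + 2) := dne hn hodd (-2) (by push_cast; ring) (by norm_num)
  have ne03 : i ≠ (i + 3) := dne hn hodd (-3) (by push_cast; ring) (by norm_num)
  have ne04 : i ≠ (i + 4) := dne hn hodd (-4) (by push_cast; ring) (by norm_num)
  have ne05 : i ≠ (i + 5) := dne hn hodd (-5) (by push_cast; ring) (by norm_num)
  have ne10 : (i + 1) ≠ i := dne hn hodd (1) (by push_cast; ring) (by norm_num)
  have ne12 : (i + 1) ≠ (i + 2) := dne hn hodd (-1) (by push_cast; ring) (by norm_num)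
  have ne13 : (i + 1) ≠ (i + 3) := dne hn hodd (-2) (by push_cast; ring) (by norm_num)
  have ne14 : (i + 1) ≠ (i + 4) := dne hn hodd (-3) (by push_cast; ring) (by norm_num)
  have ne15 : (i + 1) ≠ (i + 5) := dne hn hodd (-4) (by push_cast; ring) (by norm_num)
  have ne20 : (i + 2) ≠ i := dne hn hodd (2) (by push_cast; ring) (by norm_num)
  have ne21 : (i + 2) ≠ (i + 1) := dne hn hodd (1) (by push_cast; ring) (by norm_num)
  have ne23 : (i + 2) ≠ (i + 3) := dne hn hodd (-1) (by push_cast; ring) (by norm_num)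
  have ne24 : (i + 2) ≠ (i + 4) := dne hn hodd (-2) (by push_cast; ring) (by norm_num)
  have ne25 : (i + 2) ≠ (i + 5) := dne hn hodd (-3) (by push_cast; ring) (by norm_num)
  have ne30 : (i + 3) ≠ i := dne hn hodd (3) (by push_cast; ring) (by norm_num)
  have ne31 : (i + 3) ≠ (i + 1) := dne hn hodd (2) (by push_cast; ring) (by norm_num)
  have ne32 : (i + 3) ≠ (i + 2) := dne hn hodd (1) (by push_cast; ring) (by norm_num)
  have ne34 : (i + 3) ≠ (i + 4) := dne hn hodd (-1) (by push_cast; ring) (by norm_num)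
  have ne35 : (i + 3) ≠ (i + 5) := dne hn hodd (-2) (by push_cast; ring) (by norm_num)
  have ne40 : (i + 4) ≠ i := dne hn hodd (4) (by push_cast; ring) (by norm_num)
  have ne41 : (i + 4) ≠ (i + 1) := dne hn hodd (3) (by push_cast; ring) (by norm_num)
  have ne42 : (i + 4) ≠ (i + 2) := dne hn hodd (2) (by push_cast; ring) (by norm_num)
  have ne43 : (i + 4) ≠ (i + 3) := dne hn hodd (1) (by push_cast; ring) (by norm_num)
  have ne45 : (i + 4) ≠ (i + 5) := dne hn hodd (-1) (by push_cast; ring) (by norm_num)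
  have ne50 : (i + 5) ≠ i := dne hn hodd (5) (by push_cast; ring) (by norm_num)
  have ne51 : (i + 5) ≠ (i + 1) := dne hn hodd (4) (by push_cast; ring) (by norm_num)
  have ne52 : (i + 5) ≠ (i + 2) := dne hn hodd (3) (by push_cast; ring) (by norm_num)
  have ne53 : (i + 5) ≠ (i + 3) := dne hn hodd (2) (by push_cast; ring) (by norm_num)
  have ne54 : (i + 5) ≠ (i + 4) := dne hn hodd (1) (by push_cast; ring) (by norm_num)
  refine ⟨?_, ?_, ?_, ?_, ?_, ?_⟩ <;> unfold tau <;> simp only [Equiv.Perm.mul_apply]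
  · rw [Equiv.swap_apply_of_ne_of_ne ne02 ne04, Equiv.swap_apply_of_ne_of_ne ne01 ne03, Equiv.swap_apply_left]
  · rw [Equiv.swap_apply_of_ne_of_ne ne52 ne54, Equiv.swap_apply_of_ne_of_ne ne51 ne53, Equiv.swap_apply_right]
  · rw [Equiv.swap_apply_of_ne_of_ne ne12 ne14, Equiv.swap_apply_left, Equiv.swap_apply_of_ne_of_ne ne30 ne35]
  · rw [Equiv.swap_apply_of_ne_of_ne ne32 ne34, Equiv.swap_apply_right, Equiv.swap_apply_of_ne_of_ne ne10 ne15]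
  · rw [Equiv.swap_apply_left, Equiv.swap_apply_of_ne_of_ne ne41 ne43, Equiv.swap_apply_of_ne_of_ne ne40 ne45]
  · rw [Equiv.swap_apply_right, Equiv.swap_apply_of_ne_of_ne ne21 ne23, Equiv.swap_apply_of_ne_of_ne ne20 ne25]

end

section
variable {M : Type*}

lemma orbit_apply {β : Equiv.Perm M} {S : Set (Equiv.Perm M)} (hβ : β ∈ S)
    {x y : M} (hy : y ∈ MulAction.orbit (Subgroup.closure S) x) :
    β y ∈ MulAction.orbit (Subgroup.closure S) x := by
  obtain ⟨g, rfl⟩ := hy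
  exact ⟨⟨β, Subgroup.subset_closure hβ⟩ * g, rfl⟩

lemma asym {α : Equiv.Perm M} (hα : ∀ x, α (α x) = x) {X Y : M}
    (h : α X = Y) : α Y = X := by rw [← h, hα]

lemma workhorse_core (α τ : Equiv.Perm M) (hα : ∀ x, α (α x) = x)
    (f f' p₁ p₂ q₁ q₂ : M)
    (hf : α f = f) (hτf' : τ f' = f)
    (hp : τ p₁ = p₂) (hp' : τ p₂ = p₁)
    (hq : τ q₁ = q₂) (hq' : τ q₂ = q₁)
    (hS : ∀ y, τ y ≠ y → y = f ∨ y = f' ∨ y = p₁ ∨ y = p₂ ∨ y = q₁ ∨ y = q₂)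
    (hpp : p₁ ≠ p₂) (hpq3 : p₂ ≠ q₁) (hpq4 : p₂ ≠ q₂)
    {x : M}
    (hbad : ∀ y ∈ MulAction.orbit (Subgroup.closure {α, τ} : Subgroup (Equiv.Perm M)) x,
      α y ≠ y ∧ τ y ≠ y)
    (hp1 : p₁ ∈ MulAction.orbit (Subgroup.closure {α, τ} : Subgroup (Equiv.Perm M)) x) :
    α p₁ = p₂ ∨ α q₁ = q₂ ∨ (α p₁ = q₁ ∧ α p₂ = q₂) ∨ (α p₁ = q₂ ∧ α p₂ = q₁) := by
  set O := MulAction.orbit (Subgroup.closure {α, τ} : Subgroup (Equiv.Perm M)) x with hO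
  have hstepα : ∀ y, y ∈ O → α y ∈ O := fun y hy => orbit_apply (Set.mem_insert _ _) hy
  have hstepτ : ∀ y, y ∈ O → τ y ∈ O :=
    fun y hy => orbit_apply (Set.mem_insert_of_mem _ (Set.mem_singleton τ)) hy
  have hmem : ∀ y, y ∈ O → y = p₁ ∨ y = p₂ ∨ y = q₁ ∨ y = q₂ := by
    intro y hy
    have hy1 := hbad y hy
    rcases hS y hy1.2 with h|h|h|h|h|h
    · exact absurd (by rw [h, hf] : α y = y) hy1.1
    · have hfO : f ∈ O := by have := hstepτ y hy; rwa [h, hτf'] at this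
      exact absurd hf (hbad f hfO).1
    · exact Or.inl h
    · exact Or.inr (Or.inl h)
    · exact Or.inr (Or.inr (Or.inl h))
    · exact Or.inr (Or.inr (Or.inr h))
  have hp2 : p₂ ∈ O := by have := hstepτ p₁ hp1; rwa [hp] at this
  have hαp1 : α p₁ ∈ O := hstepα p₁ hp1
  rcases hmem _ hαp1 with h1|h1|h1|h1
  · exact absurd h1 (hbad p₁ hp1).1
  · exact Or.inl h1
  · have hαp2 : α p₂ ∈ O := hstepα p₂ hp2
    rcases hmem _ hαp2 with h2|h2|h2|h2
    · exact absurd ((asym hα h2).symm.trans h1) hpq3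
    · exact absurd h2 (hbad p₂ hp2).1
    · exact absurd ((asym hα h1).symm.trans (asym hα h2)) hpp
    · exact Or.inr (Or.inr (Or.inl ⟨h1, h2⟩))
  · have hαp2 : α p₂ ∈ O := hstepα p₂ hp2
    rcases hmem _ hαp2 with h2|h2|h2|h2
    · exact absurd ((asym hα h2).symm.trans h1) hpq4
    · exact absurd h2 (hbad p₂ hp2).1
    · exact Or.inr (Or.inr (Or.inr ⟨h1, h2⟩))
    · exact absurd ((asym hα h1).symm.trans (asym hα h2)) hpp

lemma workhorse (α τ : Equiv.Perm M) (hα : ∀ x, α (α x) = x)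
    (f f' p₁ p₂ q₁ q₂ : M)
    (hf : α f = f) (hτf' : τ f' = f)
    (hp : τ p₁ = p₂) (hp' : τ p₂ = p₁)
    (hq : τ q₁ = q₂) (hq' : τ q₂ = q₁)
    (hS : ∀ y, τ y ≠ y → y = f ∨ y = f' ∨ y = p₁ ∨ y = p₂ ∨ y = q₁ ∨ y = q₂)
    (hpp : p₁ ≠ p₂) (hqq : q₁ ≠ q₂) (hpq2 : p₁ ≠ q₂)
    (hpq3 : p₂ ≠ q₁) (hpq4 : p₂ ≠ q₂)
    {x : M}
    (hbad : ∀ y ∈ MulAction.orbit (Subgroup.closure {α, τ} : Subgroup (Equiv.Perm M)) x,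
      α y ≠ y ∧ τ y ≠ y) :
    α p₁ = p₂ ∨ α q₁ = q₂ ∨ (α p₁ = q₁ ∧ α p₂ = q₂) ∨ (α p₁ = q₂ ∧ α p₂ = q₁) := by
  set O := MulAction.orbit (Subgroup.closure {α, τ} : Subgroup (Equiv.Perm M)) x with hO
  have hxO : x ∈ O := MulAction.mem_orbit_self x
  have hstepτ : ∀ y, y ∈ O → τ y ∈ O :=
    fun y hy => orbit_apply (Set.mem_insert_of_mem _ (Set.mem_singleton τ)) hy
  have hτx : τ x ≠ x := (hbad x hxO).2
  have hSq : ∀ y, τ y ≠ y → y = f ∨ y = f' ∨ y = q₁ ∨ y = q₂ ∨ y = p₁ ∨ y = p₂ := by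
    intro y hy; rcases hS y hy with h|h|h|h|h|h <;> tauto
  have main : p₁ ∈ O ∨ q₁ ∈ O := by
    rcases hS x hτx with h|h|h|h|h|h
    · exact absurd (by rw [h, hf] : α x = x) (hbad x hxO).1
    · have hfO : f ∈ O := by have := hstepτ x hxO; rwa [h, hτf'] at this
      exact absurd hf (hbad f hfO).1
    · exact Or.inl (h ▸ hxO)
    · have := hstepτ x hxO; rw [h, hp'] at this; exact Or.inl this
    · exact Or.inr (h ▸ hxO)
    · have := hstepτ x hxO; rw [h, hq'] at this; exact Or.inr this
  rcases main with hm | hm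
  · exact workhorse_core α τ hα f f' p₁ p₂ q₁ q₂ hf hτf' hp hp' hq hq' hS hpp hpq3 hpq4 hbad hm
  · have hcore := workhorse_core α τ hα f f' q₁ q₂ p₁ p₂ hf hτf' hq hq' hp hp' hSq hqq
      (Ne.symm hpq2) (Ne.symm hpq4) hbad hm
    rcases hcore with h1|h1|⟨h1,h2⟩|⟨h1,h2⟩
    · exact Or.inr (Or.inl h1)
    · exact Or.inl h1
    · exact Or.inr (Or.inr (Or.inl ⟨asym hα h1, asym hα h2⟩))
    · exact Or.inr (Or.inr (Or.inr ⟨asym hα h2, asym hα h1⟩))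

end

/-- For every odd `n ≥ 7` and every involution `α` of `ZMod n` there exists `i` such
that every orbit of the subgroup generated by `α` and `τ_i` contains a point fixed by
`α` or fixed by `τ_i`. -/
theorem exists_tau_orbits_with_fixed_points_odd
    (n : ℕ) (hodd : Odd n) (hn : 7 ≤ n)
    (α : Equiv.Perm (ZMod n)) (hα : ∀ x, α (α x) = x) :
    ∃ i : ZMod n, ∀ x : ZMod n,
      ∃ y ∈ MulAction.orbit (Subgroup.closure {α, tau i} : Subgroup (Equiv.Perm (ZMod n))) x,
        α y = y ∨ tau i y = y := by
  haveI : NeZero n := ⟨by omega⟩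
  have hfix : ∃ f, α f = f := by
    haveI : Fact (Nat.Prime 2) := ⟨Nat.prime_two⟩
    apply Equiv.Perm.exists_fixed_point_of_prime (p := 2) (n := 1)
    · rw [ZMod.card]
      obtain ⟨k, hk⟩ := hodd
      omega
    · rw [pow_one]
      ext z
      simp [pow_succ, pow_one, Equiv.Perm.mul_apply, hα]
  obtain ⟨f, hf⟩ := hfix
  by_contra hcon
  push_neg at hcon
  obtain ⟨x0, hbad0⟩ := hcon (f)
  have hB0 : (α (f + ((1 : ℤ) : ZMod n)) = (f + ((3 : ℤ) : ZMod n))) ∨ (α (f + ((2 : ℤ) : ZMod n)) = (f + ((4 : ℤ) : ZMod n))) ∨ ((α (f + ((1 : ℤ) : ZMod n)) = (f + ((2 : ℤ) : ZMod n))) ∧ (α (f + ((3 : ℤ) : ZMod n)) = (f + ((4 : ℤ) : ZMod n)))) ∨ ((α (f + ((1 : ℤ) : ZMod n)) = (f + ((4 : ℤ) : ZMod n))) ∧ (α (f + ((3 : ℤ) : ZMod n)) = (f + ((2 : ℤ) : ZMod n)))) := by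
    obtain ⟨t00, t50, t13, t31, t24, t42⟩ := tau_spec hn hodd f
    have E1 : f + 1 = (f + ((1 : ℤ) : ZMod n)) := by push_cast; ring
    have E2 : f + 2 = (f + ((2 : ℤ) : ZMod n)) := by push_cast; ring
    have E3 : f + 3 = (f + ((3 : ℤ) : ZMod n)) := by push_cast; ring
    have E4 : f + 4 = (f + ((4 : ℤ) : ZMod n)) := by push_cast; ring
    have E5 : f + 5 = (f + ((5 : ℤ) : ZMod n)) := by push_cast; ring
    rw [E5] at t00
    rw [E5] at t50
    rw [E1, E3] at t13
    rw [E1, E3] at t31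
    rw [E2, E4] at t24
    rw [E2, E4] at t42
    have hS : ∀ y, tau f y ≠ y → y = f ∨ y = (f + ((5 : ℤ) : ZMod n)) ∨ y = (f + ((1 : ℤ) : ZMod n)) ∨ y = (f + ((3 : ℤ) : ZMod n)) ∨ y = (f + ((2 : ℤ) : ZMod n)) ∨ y = (f + ((4 : ℤ) : ZMod n)) := by
      intro y hy
      rcases tau_ne_cases hy with h|h|h|h|h|h
      · exact Or.inl h
      · exact Or.inr (Or.inl (h.trans E5))
      · exact Or.inr (Or.inr (Or.inl (h.trans E1)))
      · exact Or.inr (Or.inr (Or.inr (Or.inl (h.trans E3))))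
      · exact Or.inr (Or.inr (Or.inr (Or.inr (Or.inl (h.trans E2)))))
      · exact Or.inr (Or.inr (Or.inr (Or.inr (Or.inr ((h.trans E4))))))
    exact workhorse α (tau f) hα f (f + ((5 : ℤ) : ZMod n)) (f + ((1 : ℤ) : ZMod n)) (f + ((3 : ℤ) : ZMod n)) (f + ((2 : ℤ) : ZMod n)) (f + ((4 : ℤ) : ZMod n)) hf t50 t13 t31 t24 t42 hS (dne hn hodd (-2) (by push_cast; ring) (by norm_num)) (dne hn hodd (-2) (by push_cast; ring) (by norm_num)) (dne hn hodd (-3) (by push_cast; ring) (by norm_num)) (dne hn hodd (1) (by push_cast; ring) (by norm_num)) (dne hn hodd (-1) (by push_cast; ring) (by norm_num)) hbad0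
  obtain ⟨x5, hbad5⟩ := hcon ((f + ((-5 : ℤ) : ZMod n)))
  have hB5 : (α (f + ((-4 : ℤ) : ZMod n)) = (f + ((-2 : ℤ) : ZMod n))) ∨ (α (f + ((-3 : ℤ) : ZMod n)) = (f + ((-1 : ℤ) : ZMod n))) ∨ ((α (f + ((-4 : ℤ) : ZMod n)) = (f + ((-3 : ℤ) : ZMod n))) ∧ (α (f + ((-2 : ℤ) : ZMod n)) = (f + ((-1 : ℤ) : ZMod n)))) ∨ ((α (f + ((-4 : ℤ) : ZMod n)) = (f + ((-1 : ℤ) : ZMod n))) ∧ (α (f + ((-2 : ℤ) : ZMod n)) = (f + ((-3 : ℤ) : ZMod n)))) := by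
    obtain ⟨t00, t50, t13, t31, t24, t42⟩ := tau_spec hn hodd (f + ((-5 : ℤ) : ZMod n))
    have E1 : (f + ((-5 : ℤ) : ZMod n)) + 1 = (f + ((-4 : ℤ) : ZMod n)) := by push_cast; ring
    have E2 : (f + ((-5 : ℤ) : ZMod n)) + 2 = (f + ((-3 : ℤ) : ZMod n)) := by push_cast; ring
    have E3 : (f + ((-5 : ℤ) : ZMod n)) + 3 = (f + ((-2 : ℤ) : ZMod n)) := by push_cast; ring
    have E4 : (f + ((-5 : ℤ) : ZMod n)) + 4 = (f + ((-1 : ℤ) : ZMod n)) := by push_cast; ring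
    have E5 : (f + ((-5 : ℤ) : ZMod n)) + 5 = f := by push_cast; ring
    rw [E5] at t00
    rw [E5] at t50
    rw [E1, E3] at t13
    rw [E1, E3] at t31
    rw [E2, E4] at t24
    rw [E2, E4] at t42
    have hS : ∀ y, tau (f + ((-5 : ℤ) : ZMod n)) y ≠ y → y = f ∨ y = (f + ((-5 : ℤ) : ZMod n)) ∨ y = (f + ((-4 : ℤ) : ZMod n)) ∨ y = (f + ((-2 : ℤ) : ZMod n)) ∨ y = (f + ((-3 : ℤ) : ZMod n)) ∨ y = (f + ((-1 : ℤ) : ZMod n)) := by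
      intro y hy
      rcases tau_ne_cases hy with h|h|h|h|h|h
      · exact Or.inr (Or.inl h)
      · exact Or.inl (h.trans E5)
      · exact Or.inr (Or.inr (Or.inl (h.trans E1)))
      · exact Or.inr (Or.inr (Or.inr (Or.inl (h.trans E3))))
      · exact Or.inr (Or.inr (Or.inr (Or.inr (Or.inl (h.trans E2)))))
      · exact Or.inr (Or.inr (Or.inr (Or.inr (Or.inr ((h.trans E4))))))
    exact workhorse α (tau (f + ((-5 : ℤ) : ZMod n))) hα f (f + ((-5 : ℤ) : ZMod n)) (f + ((-4 : ℤ) : ZMod n)) (f + ((-2 : ℤ) : ZMod n)) (f + ((-3 : ℤ) : ZMod n)) (f + ((-1 : ℤ) : ZMod n)) hf t00 t13 t31 t24 t42 hS (dne hn hodd (-2) (by push_cast; ring) (by norm_num)) (dne hn hodd (-2) (by push_cast; ring) (by norm_num)) (dne hn hodd (-3) (by push_cast; ring) (by norm_num)) (dne hn hodd (1) (by push_cast; ring) (by norm_num)) (dne hn hodd (-1) (by push_cast; ring) (by norm_num)) hbad5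
  obtain ⟨x1, hbad1⟩ := hcon ((f + ((-1 : ℤ) : ZMod n)))
  have hB1 : (α (f + ((-1 : ℤ) : ZMod n)) = (f + ((4 : ℤ) : ZMod n))) ∨ (α (f + ((1 : ℤ) : ZMod n)) = (f + ((3 : ℤ) : ZMod n))) ∨ ((α (f + ((-1 : ℤ) : ZMod n)) = (f + ((1 : ℤ) : ZMod n))) ∧ (α (f + ((4 : ℤ) : ZMod n)) = (f + ((3 : ℤ) : ZMod n)))) ∨ ((α (f + ((-1 : ℤ) : ZMod n)) = (f + ((3 : ℤ) : ZMod n))) ∧ (α (f + ((4 : ℤ) : ZMod n)) = (f + ((1 : ℤ) : ZMod n)))) := by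
    obtain ⟨t00, t50, t13, t31, t24, t42⟩ := tau_spec hn hodd (f + ((-1 : ℤ) : ZMod n))
    have E1 : (f + ((-1 : ℤ) : ZMod n)) + 1 = f := by push_cast; ring
    have E2 : (f + ((-1 : ℤ) : ZMod n)) + 2 = (f + ((1 : ℤ) : ZMod n)) := by push_cast; ring
    have E3 : (f + ((-1 : ℤ) : ZMod n)) + 3 = (f + ((2 : ℤ) : ZMod n)) := by push_cast; ring
    have E4 : (f + ((-1 : ℤ) : ZMod n)) + 4 = (f + ((3 : ℤ) : ZMod n)) := by push_cast; ring
    have E5 : (f + ((-1 : ℤ) : ZMod n)) + 5 = (f + ((4 : ℤ) : ZMod n)) := by push_cast; ring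
    rw [E5] at t00
    rw [E5] at t50
    rw [E1, E3] at t13
    rw [E1, E3] at t31
    rw [E2, E4] at t24
    rw [E2, E4] at t42
    have hS : ∀ y, tau (f + ((-1 : ℤ) : ZMod n)) y ≠ y → y = f ∨ y = (f + ((2 : ℤ) : ZMod n)) ∨ y = (f + ((-1 : ℤ) : ZMod n)) ∨ y = (f + ((4 : ℤ) : ZMod n)) ∨ y = (f + ((1 : ℤ) : ZMod n)) ∨ y = (f + ((3 : ℤ) : ZMod n)) := by
      intro y hy
      rcases tau_ne_cases hy with h|h|h|h|h|h
      · exact Or.inr (Or.inr (Or.inl h))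
      · exact Or.inr (Or.inr (Or.inr (Or.inl (h.trans E5))))
      · exact Or.inl (h.trans E1)
      · exact Or.inr (Or.inl (h.trans E3))
      · exact Or.inr (Or.inr (Or.inr (Or.inr (Or.inl (h.trans E2)))))
      · exact Or.inr (Or.inr (Or.inr (Or.inr (Or.inr ((h.trans E4))))))
    exact workhorse α (tau (f + ((-1 : ℤ) : ZMod n))) hα f (f + ((2 : ℤ) : ZMod n)) (f + ((-1 : ℤ) : ZMod n)) (f + ((4 : ℤ) : ZMod n)) (f + ((1 : ℤ) : ZMod n)) (f + ((3 : ℤ) : ZMod n)) hf t31 t00 t50 t24 t42 hS (dne hn hodd (-5) (by push_cast; ring) (by norm_num)) (dne hn hodd (-2) (by push_cast; ring) (by norm_num)) (dne hn hodd (-4) (by push_cast; ring) (by norm_num)) (dne hn hodd (3) (by push_cast; ring) (by norm_num)) (dne hn hodd (1) (by push_cast; ring) (by norm_num)) hbad1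
  obtain ⟨x2, hbad2⟩ := hcon ((f + ((-2 : ℤ) : ZMod n)))
  have hB2 : (α (f + ((-2 : ℤ) : ZMod n)) = (f + ((3 : ℤ) : ZMod n))) ∨ (α (f + ((-1 : ℤ) : ZMod n)) = (f + ((1 : ℤ) : ZMod n))) ∨ ((α (f + ((-2 : ℤ) : ZMod n)) = (f + ((-1 : ℤ) : ZMod n))) ∧ (α (f + ((3 : ℤ) : ZMod n)) = (f + ((1 : ℤ) : ZMod n)))) ∨ ((α (f + ((-2 : ℤ) : ZMod n)) = (f + ((1 : ℤ) : ZMod n))) ∧ (α (f + ((3 : ℤ) : ZMod n)) = (f + ((-1 : ℤ) : ZMod n)))) := by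
    obtain ⟨t00, t50, t13, t31, t24, t42⟩ := tau_spec hn hodd (f + ((-2 : ℤ) : ZMod n))
    have E1 : (f + ((-2 : ℤ) : ZMod n)) + 1 = (f + ((-1 : ℤ) : ZMod n)) := by push_cast; ring
    have E2 : (f + ((-2 : ℤ) : ZMod n)) + 2 = f := by push_cast; ring
    have E3 : (f + ((-2 : ℤ) : ZMod n)) + 3 = (f + ((1 : ℤ) : ZMod n)) := by push_cast; ring
    have E4 : (f + ((-2 : ℤ) : ZMod n)) + 4 = (f + ((2 : ℤ) : ZMod n)) := by push_cast; ring
    have E5 : (f + ((-2 : ℤ) : ZMod n)) + 5 = (f + ((3 : ℤ) : ZMod n)) := by push_cast; ring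
    rw [E5] at t00
    rw [E5] at t50
    rw [E1, E3] at t13
    rw [E1, E3] at t31
    rw [E2, E4] at t24
    rw [E2, E4] at t42
    have hS : ∀ y, tau (f + ((-2 : ℤ) : ZMod n)) y ≠ y → y = f ∨ y = (f + ((2 : ℤ) : ZMod n)) ∨ y = (f + ((-2 : ℤ) : ZMod n)) ∨ y = (f + ((3 : ℤ) : ZMod n)) ∨ y = (f + ((-1 : ℤ) : ZMod n)) ∨ y = (f + ((1 : ℤ) : ZMod n)) := by
      intro y hy
      rcases tau_ne_cases hy with h|h|h|h|h|h
      · exact Or.inr (Or.inr (Or.inl h))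
      · exact Or.inr (Or.inr (Or.inr (Or.inl (h.trans E5))))
      · exact Or.inr (Or.inr (Or.inr (Or.inr (Or.inl (h.trans E1)))))
      · exact Or.inr (Or.inr (Or.inr (Or.inr (Or.inr ((h.trans E3))))))
      · exact Or.inl (h.trans E2)
      · exact Or.inr (Or.inl (h.trans E4))
    exact workhorse α (tau (f + ((-2 : ℤ) : ZMod n))) hα f (f + ((2 : ℤ) : ZMod n)) (f + ((-2 : ℤ) : ZMod n)) (f + ((3 : ℤ) : ZMod n)) (f + ((-1 : ℤ) : ZMod n)) (f + ((1 : ℤ) : ZMod n)) hf t42 t00 t50 t13 t31 hS (dne hn hodd (-5) (by push_cast; ring) (by norm_num)) (dne hn hodd (-2) (by push_cast; ring) (by norm_num)) (dne hn hodd (-3) (by push_cast; ring) (by norm_num)) (dne hn hodd (4) (by push_cast; ring) (by norm_num)) (dne hn hodd (2) (by push_cast; ring) (by norm_num)) hbad2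
  obtain ⟨x3, hbad3⟩ := hcon ((f + ((-3 : ℤ) : ZMod n)))
  have hB3 : (α (f + ((-3 : ℤ) : ZMod n)) = (f + ((2 : ℤ) : ZMod n))) ∨ (α (f + ((-1 : ℤ) : ZMod n)) = (f + ((1 : ℤ) : ZMod n))) ∨ ((α (f + ((-3 : ℤ) : ZMod n)) = (f + ((-1 : ℤ) : ZMod n))) ∧ (α (f + ((2 : ℤ) : ZMod n)) = (f + ((1 : ℤ) : ZMod n)))) ∨ ((α (f + ((-3 : ℤ) : ZMod n)) = (f + ((1 : ℤ) : ZMod n))) ∧ (α (f + ((2 : ℤ) : ZMod n)) = (f + ((-1 : ℤ) : ZMod n)))) := by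
    obtain ⟨t00, t50, t13, t31, t24, t42⟩ := tau_spec hn hodd (f + ((-3 : ℤ) : ZMod n))
    have E1 : (f + ((-3 : ℤ) : ZMod n)) + 1 = (f + ((-2 : ℤ) : ZMod n)) := by push_cast; ring
    have E2 : (f + ((-3 : ℤ) : ZMod n)) + 2 = (f + ((-1 : ℤ) : ZMod n)) := by push_cast; ring
    have E3 : (f + ((-3 : ℤ) : ZMod n)) + 3 = f := by push_cast; ring
    have E4 : (f + ((-3 : ℤ) : ZMod n)) + 4 = (f + ((1 : ℤ) : ZMod n)) := by push_cast; ring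
    have E5 : (f + ((-3 : ℤ) : ZMod n)) + 5 = (f + ((2 : ℤ) : ZMod n)) := by push_cast; ring
    rw [E5] at t00
    rw [E5] at t50
    rw [E1, E3] at t13
    rw [E1, E3] at t31
    rw [E2, E4] at t24
    rw [E2, E4] at t42
    have hS : ∀ y, tau (f + ((-3 : ℤ) : ZMod n)) y ≠ y → y = f ∨ y = (f + ((-2 : ℤ) : ZMod n)) ∨ y = (f + ((-3 : ℤ) : ZMod n)) ∨ y = (f + ((2 : ℤ) : ZMod n)) ∨ y = (f + ((-1 : ℤ) : ZMod n)) ∨ y = (f + ((1 : ℤ) : ZMod n)) := by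
      intro y hy
      rcases tau_ne_cases hy with h|h|h|h|h|h
      · exact Or.inr (Or.inr (Or.inl h))
      · exact Or.inr (Or.inr (Or.inr (Or.inl (h.trans E5))))
      · exact Or.inr (Or.inl (h.trans E1))
      · exact Or.inl (h.trans E3)
      · exact Or.inr (Or.inr (Or.inr (Or.inr (Or.inl (h.trans E2)))))
      · exact Or.inr (Or.inr (Or.inr (Or.inr (Or.inr ((h.trans E4))))))
    exact workhorse α (tau (f + ((-3 : ℤ) : ZMod n))) hα f (f + ((-2 : ℤ) : ZMod n)) (f + ((-3 : ℤ) : ZMod n)) (f + ((2 : ℤ) : ZMod n)) (f + ((-1 : ℤ) : ZMod n)) (f + ((1 : ℤ) : ZMod n)) hf t13 t00 t50 t24 t42 hS (dne hn hodd (-5) (by push_cast; ring) (by norm_num)) (dne hn hodd (-2) (by push_cast; ring) (by norm_num)) (dne hn hodd (-4) (by push_cast; ring) (by norm_num)) (dne hn hodd (3) (by push_cast; ring) (by norm_num)) (dne hn hodd (1) (by push_cast; ring) (by norm_num)) hbad3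
  rcases hB0 with h1 | h2 | ⟨h3, h4⟩ | ⟨h5, h6⟩
  · have hs7 := asym hα h1
    rcases hB2 with h8 | h9 | ⟨h10, h11⟩ | ⟨h12, h13⟩
    · exact dne hn hodd (-3) (by push_cast; ring) (by norm_num) ((asym hα h8).symm.trans hs7)
    · exact dne hn hodd (-4) (by push_cast; ring) (by norm_num) ((asym hα h9).symm.trans h1)
    · have hs14 := asym hα h10
      have hs15 := asym hα h11
      rcases hB5 with h16 | h17 | ⟨h18, h19⟩ | ⟨h20, h21⟩
      · exact dne hn hodd (-3) (by push_cast; ring) (by norm_num) ((asym hα h16).symm.trans h10)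
      · exact dne hn hodd (-1) (by push_cast; ring) (by norm_num) ((asym hα h17).symm.trans hs14)
      · have hs22 := asym hα h18
        have hs23 := asym hα h19
        rcases hB3 with h24 | h25 | ⟨h26, h27⟩ | ⟨h28, h29⟩
        · exact dne hn hodd (6) (by push_cast; ring) (by norm_num) (h24.symm.trans hs22)
        · exact dne hn hodd (-4) (by push_cast; ring) (by norm_num) ((asym hα h25).symm.trans hs15)
        · exact dne hn hodd (-1) (by push_cast; ring) (by norm_num) ((asym hα h26).symm.trans hs23)
        · exact dne hn hodd (-6) (by push_cast; ring) (by norm_num) ((asym hα h28).symm.trans hs15)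
      · exact dne hn hodd (-2) (by push_cast; ring) (by norm_num) ((asym hα h20).symm.trans hs14)
    · exact dne hn hodd (-5) (by push_cast; ring) (by norm_num) ((asym hα h12).symm.trans h1)
  · have hs30 := asym hα h2
    rcases hB1 with h31 | h32 | ⟨h33, h34⟩ | ⟨h35, h36⟩
    · exact dne hn hodd (-3) (by push_cast; ring) (by norm_num) ((asym hα h31).symm.trans hs30)
    · have hs37 := asym hα h32
      rcases hB2 with h38 | h39 | ⟨h40, h41⟩ | ⟨h42, h43⟩
      · exact dne hn hodd (-3) (by push_cast; ring) (by norm_num) ((asym hα h38).symm.trans hs37)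
      · exact dne hn hodd (-4) (by push_cast; ring) (by norm_num) ((asym hα h39).symm.trans h32)
      · have hs44 := asym hα h40
        have hs45 := asym hα h41
        rcases hB5 with h46 | h47 | ⟨h48, h49⟩ | ⟨h50, h51⟩
        · exact dne hn hodd (-3) (by push_cast; ring) (by norm_num) ((asym hα h46).symm.trans h40)
        · exact dne hn hodd (-1) (by push_cast; ring) (by norm_num) ((asym hα h47).symm.trans hs44)
        · have hs52 := asym hα h48
          have hs53 := asym hα h49
          rcases hB3 with h54 | h55 | ⟨h56, h57⟩ | ⟨h58, h59⟩
          · exact dne hn hodd (6) (by push_cast; ring) (by norm_num) (h54.symm.trans hs52)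
          · exact dne hn hodd (-4) (by push_cast; ring) (by norm_num) ((asym hα h55).symm.trans hs45)
          · exact dne hn hodd (-1) (by push_cast; ring) (by norm_num) ((asym hα h56).symm.trans hs53)
          · exact dne hn hodd (-6) (by push_cast; ring) (by norm_num) ((asym hα h58).symm.trans hs45)
        · exact dne hn hodd (-2) (by push_cast; ring) (by norm_num) ((asym hα h50).symm.trans hs44)
      · exact dne hn hodd (-5) (by push_cast; ring) (by norm_num) ((asym hα h42).symm.trans h32)
    · exact dne hn hodd (1) (by push_cast; ring) (by norm_num) (h34.symm.trans hs30)
    · exact dne hn hodd (-1) (by push_cast; ring) (by norm_num) (h36.symm.trans hs30)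
  · have hs60 := asym hα h3
    have hs61 := asym hα h4
    rcases hB1 with h62 | h63 | ⟨h64, h65⟩ | ⟨h66, h67⟩
    · exact dne hn hodd (-4) (by push_cast; ring) (by norm_num) ((asym hα h62).symm.trans hs61)
    · exact dne hn hodd (1) (by push_cast; ring) (by norm_num) (h63.symm.trans h3)
    · exact dne hn hodd (-3) (by push_cast; ring) (by norm_num) ((asym hα h64).symm.trans h3)
    · exact dne hn hodd (-5) (by push_cast; ring) (by norm_num) ((asym hα h66).symm.trans h4)
  · have hs68 := asym hα h5
    have hs69 := asym hα h6
    rcases hB1 with h70 | h71 | ⟨h72, h73⟩ | ⟨h74, h75⟩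
    · exact dne hn hodd (-2) (by push_cast; ring) (by norm_num) ((asym hα h70).symm.trans hs68)
    · exact dne hn hodd (-1) (by push_cast; ring) (by norm_num) (h71.symm.trans h5)
    · exact dne hn hodd (-5) (by push_cast; ring) (by norm_num) ((asym hα h72).symm.trans h5)
    · exact dne hn hodd (-3) (by push_cast; ring) (by norm_num) ((asym hα h74).symm.trans h6)
end

section
/- Let n ≥ 1 and let c : ZMod n → ZMod 2. If there exists k ∈ ZMod n with c(k) ≠ c(k+5), c(k+1) ≠ c(k+3), and c(k+2) ≠ c(k+4), then there exists k' ∈ ZMod n with c(k') = c(k'+1), c(k'+2) = c(k'+3), and c(k'+1) ≠ c(k'+2). -/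
/-- If a 2-coloring `c` of `ZMod n` admits an index `k` with `c k ≠ c (k+5)`,
`c (k+1) ≠ c (k+3)` and `c (k+2) ≠ c (k+4)`, then it admits an index `k'` with
`c k' = c (k'+1)`, `c (k'+2) = c (k'+3)` and `c (k'+1) ≠ c (k'+2)`. -/
theorem exists_good_index (n : ℕ) (hn : 1 ≤ n) (c : ZMod n → ZMod 2)
    (h : ∃ k : ZMod n, c k ≠ c (k + 5) ∧ c (k + 1) ≠ c (k + 3) ∧ c (k + 2) ≠ c (k + 4)) :
    ∃ k' : ZMod n, c k' = c (k' + 1) ∧ c (k' + 2) = c (k' + 3) ∧ c (k' + 1) ≠ c (k' + 2) := by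
  obtain ⟨k, h0, h1, h2⟩ := h
  have key : ∀ a0 a1 a2 a3 a4 a5 : ZMod 2, a0 ≠ a5 → a1 ≠ a3 → a2 ≠ a4 →
      (a0 = a1 ∧ a2 = a3 ∧ a1 ≠ a2) ∨ (a1 = a2 ∧ a3 = a4 ∧ a2 ≠ a3) ∨
      (a2 = a3 ∧ a4 = a5 ∧ a3 ≠ a4) := by decide
  have e1 : k + 1 + 1 = k + 2 := by ring
  have e2 : k + 1 + 2 = k + 3 := by ring
  have e3 : k + 1 + 3 = k + 4 := by ring
  have e4 : k + 2 + 1 = k + 3 := by ring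
  have e5 : k + 2 + 2 = k + 4 := by ring
  have e6 : k + 2 + 3 = k + 5 := by ring
  rcases key (c k) (c (k+1)) (c (k+2)) (c (k+3)) (c (k+4)) (c (k+5)) h0 h1 h2 with
    ⟨p, q, r⟩ | ⟨p, q, r⟩ | ⟨p, q, r⟩
  · exact ⟨k, p, q, r⟩
  · exact ⟨k + 1, by rw [e1]; exact p, by rw [e2, e3]; exact q, by rw [e1, e2]; exact r⟩
  · exact ⟨k + 2, by rw [e4]; exact p, by rw [e5, e6]; exact q, by rw [e4, e5]; exact r⟩
end

section
/- Let n be an odd integer with n ≥ 7, and let c : ZMod n → ZMod 2 be such that there exists k' ∈ ZMod n with c(k') = c(k'+1), c(k'+2) = c(k'+3), and c(k'+1) ≠ c(k'+2). Let ι : ZMod 2 → ZMod 7 be the map sending 0 to 0 and 1 to 1. Then there exists f : ZMod n → ZMod 7 such that for every i ∈ ZMod n: f(i) − f(i+1) ∈ {2,3,4,5} ⊆ ZMod 7, f(i) − ι(c(i)) ∈ {2,3,4,5} ⊆ ZMod 7, and f(i) − ι(c(i+1)) ∈ {2,3,4,5} ⊆ ZMod 7. -/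
/-- The map sending `0 : ZMod 2` to `0 : ZMod 7` and `1` to `1`. -/
def iota : ZMod 2 → ZMod 7 := fun x => if x = 0 then 0 else 1

def gfun : ℕ → ZMod 7 := fun j =>
  if j = 0 then 2 else if j = 1 then 4 else if j = 2 then 6 else if j % 2 = 1 then 3 else 5

lemma gfun_mid' : ∀ (v : ZMod 7) (x : ZMod 2), (v = 3 ∨ v = 4 ∨ v = 5) →
    v - iota x ∈ ({2,3,4,5} : Set (ZMod 7)) := by decide

lemma gfun_mid (x : ZMod 2) {v : ZMod 7} (hv : v = 3 ∨ v = 4 ∨ v = 5) :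
    v - iota x ∈ ({2,3,4,5} : Set (ZMod 7)) := gfun_mid' v x hv

lemma key_s7 (n : ℕ) (hodd : Odd n) (hn : 7 ≤ n) (c : ZMod n → ZMod 2) (k' : ZMod n)
    (h0 : c k' = 0) (h1 : c (k' + 1) = 0) (h2 : c (k' + 2) = 1) (h3 : c (k' + 3) = 1) :
    ∃ f : ZMod n → ZMod 7, ∀ i : ZMod n,
      f i - f (i + 1) ∈ ({2, 3, 4, 5} : Set (ZMod 7)) ∧
      f i - iota (c i) ∈ ({2, 3, 4, 5} : Set (ZMod 7)) ∧
      f i - iota (c (i + 1)) ∈ ({2, 3, 4, 5} : Set (ZMod 7)) := by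
  haveI : NeZero n := ⟨by omega⟩
  haveI : Fact (1 < n) := ⟨by omega⟩
  refine ⟨fun i => gfun ((i - k').val), fun i => ?_⟩
  dsimp only
  set j := (i - k').val with hj
  have hjn : j < n := ZMod.val_lt _
  have hcast : ((j : ℕ) : ZMod n) = i - k' := ZMod.natCast_rightInverse _
  have hstep : (i + 1 - k').val = (j + 1) % n := by
    have e : i + 1 - k' = (i - k') + 1 := by ring
    rw [e, ZMod.val_add, ZMod.val_one]
  clear_value j
  by_cases hj0 : j = 0
  · -- i = k'
    have hi : i = k' := by
      have : i - k' = 0 := by rw [← hcast, hj0]; simp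
      linear_combination this
    have hi1 : i + 1 = k' + 1 := by rw [hi]
    have h1n : (0 + 1) % n = 1 := Nat.mod_eq_of_lt (by omega)
    rw [hstep, hj0, h1n, hi1, hi, h1, h0]
    decide
  · by_cases hj1 : j = 1
    · have hi : i = k' + 1 := by
        have : i - k' = 1 := by rw [← hcast, hj1]; simp
        linear_combination this
      have hi1 : i + 1 = k' + 2 := by rw [hi]; ring
      have h2n : (1 + 1) % n = 2 := Nat.mod_eq_of_lt (by omega)
      rw [hstep, hj1, h2n, hi1, hi, h1, h2]
      decide
    · by_cases hj2 : j = 2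
      · have hi : i = k' + 2 := by
          have : i - k' = 2 := by rw [← hcast, hj2]; push_cast; ring
          linear_combination this
        have hi1 : i + 1 = k' + 3 := by rw [hi]; ring
        have h3n : (2 + 1) % n = 3 := Nat.mod_eq_of_lt (by omega)
        rw [hstep, hj2, h3n, hi1, hi, h2, h3]
        decide
      · by_cases hjtop : j = n - 1
        · -- wraps to 0
          have h0n : (j + 1) % n = 0 := by rw [show j + 1 = n by omega]; exact Nat.mod_self n
          have hpar : j % 2 = 0 := by
            obtain ⟨m, hm⟩ := hodd; omega
          have hi1 : i + 1 = k' := by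
            have : i - k' + 1 = 0 := by
              rw [← hcast]
              have : ((n : ℕ) : ZMod n) = 0 := ZMod.natCast_self n
              calc ((j : ℕ) : ZMod n) + 1 = ((j + 1 : ℕ) : ZMod n) := by push_cast; ring
                _ = ((n : ℕ) : ZMod n) := by rw [show j + 1 = n by omega]
                _ = 0 := ZMod.natCast_self n
            linear_combination this
          have hgj : gfun j = 5 := by
            simp only [gfun, hj0, hj1, hj2, if_false, hpar]
            norm_num
          rw [hstep, h0n, hi1, hgj, h0]
          refine ⟨by decide, gfun_mid _ (by tauto), by decide⟩
        · -- 3 ≤ j < n - 1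
          have hj3 : 3 ≤ j := by omega
          have hjlt : j + 1 < n := by omega
          have hmod : (j + 1) % n = j + 1 := Nat.mod_eq_of_lt (by omega)
          rw [hstep, hmod]
          have hgj : gfun j = if j % 2 = 1 then 3 else 5 := by
            simp only [gfun, hj0, hj1, hj2, if_false]
          have hgj1 : gfun (j+1) = if (j+1) % 2 = 1 then 3 else 5 := by
            simp only [gfun]
            rw [if_neg (by omega), if_neg (by omega), if_neg (by omega)]
          rcases Nat.even_or_odd j with he | ho
          · have e1 : j % 2 = 0 := Nat.even_iff.mp he
            rw [hgj, hgj1, if_neg (by omega), if_pos (by omega)]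
            exact ⟨by decide, gfun_mid _ (by tauto), gfun_mid _ (by tauto)⟩
          · have e1 : j % 2 = 1 := Nat.odd_iff.mp ho
            rw [hgj, hgj1, if_pos (by omega), if_neg (by omega)]
            exact ⟨by decide, gfun_mid _ (by tauto), gfun_mid _ (by tauto)⟩

lemma two_cases : ∀ x : ZMod 2, x = 0 ∨ x = 1 := by decide

lemma Sneg : ∀ y : ZMod 7, y ∈ ({2,3,4,5} : Set (ZMod 7)) → -y ∈ ({2,3,4,5} : Set (ZMod 7)) := by
  decide

lemma iflip : ∀ x : ZMod 2, iota x = 1 - iota (x + 1) := by decide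

/-- The odd-cycle coloring step: given an odd `n ≥ 7` and matching colors
`c : ZMod n → ZMod 2` admitting a good index `k'`, the edges of the cycle can be
colored by `f : ZMod n → ZMod 7` so that consecutive cycle edges, and each cycle edge
and the matching edges at its two endpoints, get colors differing by an element of
`{2,3,4,5}`. -/
theorem odd_cycle_coloring (n : ℕ) (hodd : Odd n) (hn : 7 ≤ n) (c : ZMod n → ZMod 2)
    (h : ∃ k' : ZMod n, c k' = c (k' + 1) ∧ c (k' + 2) = c (k' + 3) ∧ c (k' + 1) ≠ c (k' + 2)) :
    ∃ f : ZMod n → ZMod 7, ∀ i : ZMod n,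
      f i - f (i + 1) ∈ ({2, 3, 4, 5} : Set (ZMod 7)) ∧
      f i - iota (c i) ∈ ({2, 3, 4, 5} : Set (ZMod 7)) ∧
      f i - iota (c (i + 1)) ∈ ({2, 3, 4, 5} : Set (ZMod 7)) := by
  obtain ⟨k', hA, hB, hC⟩ := h
  rcases two_cases (c k') with h0 | h0
  · have h1 : c (k' + 1) = 0 := by rw [← hA]; exact h0
    have h2 : c (k' + 2) = 1 := by
      rcases two_cases (c (k' + 2)) with hx | hx
      · exact absurd (h1.trans hx.symm) hC
      · exact hx
    have h3 : c (k' + 3) = 1 := by rw [← hB]; exact h2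
    exact key_s7 n hodd hn c k' h0 h1 h2 h3
  · have h1 : c (k' + 1) = 1 := by rw [← hA]; exact h0
    have h2 : c (k' + 2) = 0 := by
      rcases two_cases (c (k' + 2)) with hx | hx
      · exact hx
      · exact absurd (h1.trans hx.symm) hC
    have h3 : c (k' + 3) = 0 := by rw [← hB]; exact h2
    obtain ⟨f, hf⟩ := key_s7 n hodd hn (fun i => c i + 1) k'
      (by show c k' + 1 = 0; rw [h0]; decide) (by show c (k' + 1) + 1 = 0; rw [h1]; decide)
      (by show c (k' + 2) + 1 = 1; rw [h2]; decide) (by show c (k' + 3) + 1 = 1; rw [h3]; decide)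
    refine ⟨fun i => 1 - f i, fun i => ?_⟩
    obtain ⟨p, q, r⟩ := hf i
    refine ⟨?_, ?_, ?_⟩
    · have e : (1 - f i) - (1 - f (i + 1)) = -(f i - f (i + 1)) := by ring
      rw [e]; exact Sneg _ p
    · have e : (1 - f i) - iota (c i) = -(f i - iota (c i + 1)) := by
        rw [iflip (c i)]; ring
      rw [e]; exact Sneg _ q
    · have e : (1 - f i) - iota (c (i + 1)) = -(f i - iota (c (i + 1) + 1)) := by
        rw [iflip (c (i + 1))]; ring
      rw [e]; exact Sneg _ r
end

section
/- Let n be an odd integer with n ≥ 9 and let α be an involution of ZMod n (a permutation with α ∘ α = id) with α(5) = 5. Suppose that for each i ∈ {2,3} there is an orbit of the action on ZMod n of the subgroup of permutations generated by α and τ_i containing no point fixed by α and no point fixed by τ_i. Then at least one of the following six cases holds: (a) α(2) = 7 and α(3) = 8; (b) α(4) = 6; (c) α(2) = 4, α(6) = 7 and α(3) = 8; (d) α(2) = 6, α(4) = 7 and α(3) = 8; (e) α(2) = 7, α(3) = 4 and α(6) = 8; (f) α(2) = 7, α(3) = 6 and α(4) = 8. -/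
/-- Generic combinatorial lemma: if an orbit `O`, closed under the involution `α`
and the permutation `τ`, is contained in `{a,b,c,d}` where `τ` pairs `a ↔ d` and
`b ↔ c`, is nonempty, and `α` has no fixed point on `O`, then one of four cases
for `α` holds. -/
lemma comb_lemma {X : Type*} (α τ : Equiv.Perm X) (O : Set X) (a b c d : X)
    (hab : a ≠ b) (hac : a ≠ c) (hbc : b ≠ c)
    (hinv : ∀ x, α (α x) = x)
    (hne : ∀ y ∈ O, α y ≠ y)
    (hαO : ∀ y ∈ O, α y ∈ O) (hτO : ∀ y ∈ O, τ y ∈ O)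
    (hτb : τ b = c) (hτc : τ c = b) (hτd : τ d = a)
    (hsub : ∀ y ∈ O, y = a ∨ y = b ∨ y = c ∨ y = d)
    (hx : ∃ x, x ∈ O) :
    α a = d ∨ α b = c ∨ (α a = b ∧ α c = d) ∨ (α a = c ∧ α b = d) := by
  by_cases ha : a ∈ O
  · have hαa := hαO a ha
    rcases hsub _ hαa with h | h | h | h
    · exact absurd h (hne a ha)
    · -- α a = b
      have hb : b ∈ O := h ▸ hαa
      have hc : c ∈ O := by have := hτO b hb; rwa [hτb] at this
      have hαc := hαO c hc
      rcases hsub _ hαc with h2 | h2 | h2 | h2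
      · exfalso
        apply hbc
        have h3 : α a = c := by rw [← h2, hinv]
        rw [h] at h3; exact h3
      · exfalso
        apply hac
        have h3 : α b = c := by rw [← h2, hinv]
        have h4 : α b = a := by rw [← h, hinv]
        rw [h4] at h3; exact h3
      · exact absurd h2 (hne c hc)
      · exact Or.inr (Or.inr (Or.inl ⟨h, h2⟩))
    · -- α a = c
      have hc : c ∈ O := h ▸ hαa
      have hb : b ∈ O := by have := hτO c hc; rwa [hτc] at this
      have hαb := hαO b hb
      rcases hsub _ hαb with h2 | h2 | h2 | h2
      · exfalso
        apply hbc
        have h3 : α a = b := by rw [← h2, hinv]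
        rw [h] at h3; exact h3.symm
      · exact absurd h2 (hne b hb)
      · exfalso
        apply hab
        have h3 : α c = b := by rw [← h2, hinv]
        have h4 : α c = a := by rw [← h, hinv]
        rw [h4] at h3; exact h3
      · exact Or.inr (Or.inr (Or.inr ⟨h, h2⟩))
    · exact Or.inl h
  · -- a ∉ O
    obtain ⟨x, hxO⟩ := hx
    have hb : b ∈ O := by
      rcases hsub x hxO with h | h | h | h
      · exact absurd (h ▸ hxO) ha
      · exact h ▸ hxO
      · have := hτO x hxO
        rw [h, hτc] at this
        exact this
      · exfalso; apply ha
        have := hτO x hxO; rw [h, hτd] at this; exact this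
    have hαb := hαO b hb
    rcases hsub _ hαb with h2 | h2 | h2 | h2
    · exact absurd (h2 ▸ hαb) ha
    · exact absurd h2 (hne b hb)
    · exact Or.inr (Or.inl h2)
    · exfalso; apply ha
      have hd : d ∈ O := h2 ▸ hαb
      have := hτO d hd; rwa [hτd] at this

/-- The case analysis in the proof of Lemma 2: if `n ≥ 9` is odd, `α` is an involution
of `ZMod n` fixing `5`, and for each `i ∈ {2,3}` some orbit of the subgroup generated
by `α` and `τ_i` contains no fixed point of `α` and no fixed point of `τ_i`, then one
of the six listed cases holds. -/
theorem case_analysis_odd (n : ℕ) (hodd : Odd n) (hn : 9 ≤ n)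
    (α : Equiv.Perm (ZMod n)) (hα : ∀ x, α (α x) = x)
    (hhalf : α 5 = 5)
    (hclosed : ∀ i ∈ ({2, 3} : Set (ZMod n)), ∃ x : ZMod n,
      ∀ y ∈ MulAction.orbit (Subgroup.closure {α, tau i} : Subgroup (Equiv.Perm (ZMod n))) x,
        α y ≠ y ∧ tau i y ≠ y) :
    (α 2 = 7 ∧ α 3 = 8) ∨
    (α 4 = 6) ∨
    (α 2 = 4 ∧ α 6 = 7 ∧ α 3 = 8) ∨
    (α 2 = 6 ∧ α 4 = 7 ∧ α 3 = 8) ∨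
    (α 2 = 7 ∧ α 3 = 4 ∧ α 6 = 8) ∨
    (α 2 = 7 ∧ α 3 = 6 ∧ α 4 = 8) := by
  haveI : NeZero n := ⟨by omega⟩
  have castinj : ∀ a b : ℕ, a < 9 → b < 9 → ((a:ZMod n) = (b:ZMod n)) → a = b := by
    intro a b ha hb h
    have := congrArg ZMod.val h
    rwa [ZMod.val_natCast_of_lt (by omega), ZMod.val_natCast_of_lt (by omega)] at this
  have nee : ∀ a b : ℕ, a < 9 → b < 9 → a ≠ b → ((a:ZMod n) ≠ (b:ZMod n)) :=
    fun a b ha hb h hc => h (castinj a b ha hb hc)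
  have ne23 : (2:ZMod n) ≠ 3 := by exact_mod_cast nee 2 3 (by norm_num) (by norm_num) (by norm_num)
  have ne24 : (2:ZMod n) ≠ 4 := by exact_mod_cast nee 2 4 (by norm_num) (by norm_num) (by norm_num)
  have ne25 : (2:ZMod n) ≠ 5 := by exact_mod_cast nee 2 5 (by norm_num) (by norm_num) (by norm_num)
  have ne26 : (2:ZMod n) ≠ 6 := by exact_mod_cast nee 2 6 (by norm_num) (by norm_num) (by norm_num)
  have ne28 : (2:ZMod n) ≠ 8 := by exact_mod_cast nee 2 8 (by norm_num) (by norm_num) (by norm_num)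
  have ne34 : (3:ZMod n) ≠ 4 := by exact_mod_cast nee 3 4 (by norm_num) (by norm_num) (by norm_num)
  have ne35 : (3:ZMod n) ≠ 5 := by exact_mod_cast nee 3 5 (by norm_num) (by norm_num) (by norm_num)
  have ne36 : (3:ZMod n) ≠ 6 := by exact_mod_cast nee 3 6 (by norm_num) (by norm_num) (by norm_num)
  have ne37 : (3:ZMod n) ≠ 7 := by exact_mod_cast nee 3 7 (by norm_num) (by norm_num) (by norm_num)
  have ne42 : (4:ZMod n) ≠ 2 := by exact_mod_cast nee 4 2 (by norm_num) (by norm_num) (by norm_num)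
  have ne43 : (4:ZMod n) ≠ 3 := by exact_mod_cast nee 4 3 (by norm_num) (by norm_num) (by norm_num)
  have ne45 : (4:ZMod n) ≠ 5 := by exact_mod_cast nee 4 5 (by norm_num) (by norm_num) (by norm_num)
  have ne46 : (4:ZMod n) ≠ 6 := by exact_mod_cast nee 4 6 (by norm_num) (by norm_num) (by norm_num)
  have ne47 : (4:ZMod n) ≠ 7 := by exact_mod_cast nee 4 7 (by norm_num) (by norm_num) (by norm_num)
  have ne48 : (4:ZMod n) ≠ 8 := by exact_mod_cast nee 4 8 (by norm_num) (by norm_num) (by norm_num)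
  have ne52 : (5:ZMod n) ≠ 2 := by exact_mod_cast nee 5 2 (by norm_num) (by norm_num) (by norm_num)
  have ne53 : (5:ZMod n) ≠ 3 := by exact_mod_cast nee 5 3 (by norm_num) (by norm_num) (by norm_num)
  have ne54 : (5:ZMod n) ≠ 4 := by exact_mod_cast nee 5 4 (by norm_num) (by norm_num) (by norm_num)
  have ne56 : (5:ZMod n) ≠ 6 := by exact_mod_cast nee 5 6 (by norm_num) (by norm_num) (by norm_num)
  have ne57 : (5:ZMod n) ≠ 7 := by exact_mod_cast nee 5 7 (by norm_num) (by norm_num) (by norm_num)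
  have ne58 : (5:ZMod n) ≠ 8 := by exact_mod_cast nee 5 8 (by norm_num) (by norm_num) (by norm_num)
  have ne62 : (6:ZMod n) ≠ 2 := by exact_mod_cast nee 6 2 (by norm_num) (by norm_num) (by norm_num)
  have ne63 : (6:ZMod n) ≠ 3 := by exact_mod_cast nee 6 3 (by norm_num) (by norm_num) (by norm_num)
  have ne65 : (6:ZMod n) ≠ 5 := by exact_mod_cast nee 6 5 (by norm_num) (by norm_num) (by norm_num)
  have ne67 : (6:ZMod n) ≠ 7 := by exact_mod_cast nee 6 7 (by norm_num) (by norm_num) (by norm_num)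
  have ne68 : (6:ZMod n) ≠ 8 := by exact_mod_cast nee 6 8 (by norm_num) (by norm_num) (by norm_num)
  have ne73 : (7:ZMod n) ≠ 3 := by exact_mod_cast nee 7 3 (by norm_num) (by norm_num) (by norm_num)
  have ne74 : (7:ZMod n) ≠ 4 := by exact_mod_cast nee 7 4 (by norm_num) (by norm_num) (by norm_num)
  have ne75 : (7:ZMod n) ≠ 5 := by exact_mod_cast nee 7 5 (by norm_num) (by norm_num) (by norm_num)
  have ne76 : (7:ZMod n) ≠ 6 := by exact_mod_cast nee 7 6 (by norm_num) (by norm_num) (by norm_num)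
  have ne78 : (7:ZMod n) ≠ 8 := by exact_mod_cast nee 7 8 (by norm_num) (by norm_num) (by norm_num)
  have ne84 : (8:ZMod n) ≠ 4 := by exact_mod_cast nee 8 4 (by norm_num) (by norm_num) (by norm_num)
  have ne85 : (8:ZMod n) ≠ 5 := by exact_mod_cast nee 8 5 (by norm_num) (by norm_num) (by norm_num)
  have ne86 : (8:ZMod n) ≠ 6 := by exact_mod_cast nee 8 6 (by norm_num) (by norm_num) (by norm_num)
  have ne87 : (8:ZMod n) ≠ 7 := by exact_mod_cast nee 8 7 (by norm_num) (by norm_num) (by norm_num)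
  -- explicit forms of tau 2 and tau 3
  have ht2 : tau (2:ZMod n) = Equiv.swap 2 7 * Equiv.swap 3 5 * Equiv.swap 4 6 := by
    unfold tau; norm_num
  have ht3 : tau (3:ZMod n) = Equiv.swap 3 8 * Equiv.swap 4 6 * Equiv.swap 5 7 := by
    unfold tau; norm_num
  -- values of tau 2
  have t2_2 : tau (2:ZMod n) 2 = 7 := by
    rw [ht2, Equiv.Perm.mul_apply, Equiv.Perm.mul_apply,
      Equiv.swap_apply_of_ne_of_ne ne24 ne26, Equiv.swap_apply_of_ne_of_ne ne23 ne25,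
      Equiv.swap_apply_left]
  have t2_7 : tau (2:ZMod n) 7 = 2 := by
    rw [ht2, Equiv.Perm.mul_apply, Equiv.Perm.mul_apply,
      Equiv.swap_apply_of_ne_of_ne ne74 ne76, Equiv.swap_apply_of_ne_of_ne ne73 ne75,
      Equiv.swap_apply_right]
  have t2_4 : tau (2:ZMod n) 4 = 6 := by
    rw [ht2, Equiv.Perm.mul_apply, Equiv.Perm.mul_apply, Equiv.swap_apply_left,
      Equiv.swap_apply_of_ne_of_ne ne63 ne65, Equiv.swap_apply_of_ne_of_ne ne62 ne67]
  have t2_6 : tau (2:ZMod n) 6 = 4 := by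
    rw [ht2, Equiv.Perm.mul_apply, Equiv.Perm.mul_apply, Equiv.swap_apply_right,
      Equiv.swap_apply_of_ne_of_ne ne43 ne45, Equiv.swap_apply_of_ne_of_ne ne42 ne47]
  have t2_3 : tau (2:ZMod n) 3 = 5 := by
    rw [ht2, Equiv.Perm.mul_apply, Equiv.Perm.mul_apply,
      Equiv.swap_apply_of_ne_of_ne ne34 ne36, Equiv.swap_apply_left,
      Equiv.swap_apply_of_ne_of_ne ne52 ne57]
  -- values of tau 3
  have t3_3 : tau (3:ZMod n) 3 = 8 := by
    rw [ht3, Equiv.Perm.mul_apply, Equiv.Perm.mul_apply,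
      Equiv.swap_apply_of_ne_of_ne ne35 ne37, Equiv.swap_apply_of_ne_of_ne ne34 ne36,
      Equiv.swap_apply_left]
  have t3_8 : tau (3:ZMod n) 8 = 3 := by
    rw [ht3, Equiv.Perm.mul_apply, Equiv.Perm.mul_apply,
      Equiv.swap_apply_of_ne_of_ne ne85 ne87, Equiv.swap_apply_of_ne_of_ne ne84 ne86,
      Equiv.swap_apply_right]
  have t3_4 : tau (3:ZMod n) 4 = 6 := by
    rw [ht3, Equiv.Perm.mul_apply, Equiv.Perm.mul_apply,
      Equiv.swap_apply_of_ne_of_ne ne45 ne47, Equiv.swap_apply_left,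
      Equiv.swap_apply_of_ne_of_ne ne63 ne68]
  have t3_6 : tau (3:ZMod n) 6 = 4 := by
    rw [ht3, Equiv.Perm.mul_apply, Equiv.Perm.mul_apply,
      Equiv.swap_apply_of_ne_of_ne ne65 ne67, Equiv.swap_apply_right,
      Equiv.swap_apply_of_ne_of_ne ne43 ne48]
  have t3_7 : tau (3:ZMod n) 7 = 5 := by
    rw [ht3, Equiv.Perm.mul_apply, Equiv.Perm.mul_apply, Equiv.swap_apply_right,
      Equiv.swap_apply_of_ne_of_ne ne54 ne56, Equiv.swap_apply_of_ne_of_ne ne53 ne58]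
  -- points outside the support are fixed
  have tfix2 : ∀ y : ZMod n, y ≠ 2 → y ≠ 3 → y ≠ 4 → y ≠ 5 → y ≠ 6 → y ≠ 7 →
      tau 2 y = y := by
    intro y h2 h3 h4 h5 h6 h7
    rw [ht2, Equiv.Perm.mul_apply, Equiv.Perm.mul_apply,
      Equiv.swap_apply_of_ne_of_ne h4 h6, Equiv.swap_apply_of_ne_of_ne h3 h5,
      Equiv.swap_apply_of_ne_of_ne h2 h7]
  have tfix3 : ∀ y : ZMod n, y ≠ 3 → y ≠ 4 → y ≠ 5 → y ≠ 6 → y ≠ 7 → y ≠ 8 →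
      tau 3 y = y := by
    intro y h3 h4 h5 h6 h7 h8
    rw [ht3, Equiv.Perm.mul_apply, Equiv.Perm.mul_apply,
      Equiv.swap_apply_of_ne_of_ne h5 h7, Equiv.swap_apply_of_ne_of_ne h4 h6,
      Equiv.swap_apply_of_ne_of_ne h3 h8]
  -- orbits
  obtain ⟨x2, hcond2⟩ := hclosed 2 (Set.mem_insert _ _)
  obtain ⟨x3, hcond3⟩ := hclosed 3 (Set.mem_insert_of_mem _ rfl)
  set H2 := (Subgroup.closure {α, tau (2:ZMod n)} : Subgroup (Equiv.Perm (ZMod n))) with hH2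
  set H3 := (Subgroup.closure {α, tau (3:ZMod n)} : Subgroup (Equiv.Perm (ZMod n))) with hH3
  set O2 := MulAction.orbit H2 x2 with hO2
  set O3 := MulAction.orbit H3 x3 with hO3
  have hmem : ∀ (H : Subgroup (Equiv.Perm (ZMod n))) (x : ZMod n)
      (g : Equiv.Perm (ZMod n)), g ∈ H → ∀ y ∈ MulAction.orbit H x,
      g y ∈ MulAction.orbit H x := by
    intro H x g hg y hy
    obtain ⟨h, hh⟩ := hy
    refine ⟨⟨g, hg⟩ * h, ?_⟩
    have hh' : h • x = y := hh
    show (⟨g, hg⟩ * h : H) • x = g y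
    rw [mul_smul, hh']
    rfl
  have hα2 : α ∈ H2 := Subgroup.subset_closure (Set.mem_insert _ _)
  have hτ2 : tau (2:ZMod n) ∈ H2 := Subgroup.subset_closure (Set.mem_insert_of_mem _ rfl)
  have hα3 : α ∈ H3 := Subgroup.subset_closure (Set.mem_insert _ _)
  have hτ3 : tau (3:ZMod n) ∈ H3 := Subgroup.subset_closure (Set.mem_insert_of_mem _ rfl)
  have hαO2 : ∀ y ∈ O2, α y ∈ O2 := fun y hy => hmem H2 x2 α hα2 y hy
  have hτO2 : ∀ y ∈ O2, tau 2 y ∈ O2 := fun y hy => hmem H2 x2 _ hτ2 y hy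
  have hαO3 : ∀ y ∈ O3, α y ∈ O3 := fun y hy => hmem H3 x3 α hα3 y hy
  have hτO3 : ∀ y ∈ O3, tau 3 y ∈ O3 := fun y hy => hmem H3 x3 _ hτ3 y hy
  -- the orbits avoid 5
  have h5O2 : (5:ZMod n) ∉ O2 := fun h => (hcond2 5 h).1 hhalf
  have h5O3 : (5:ZMod n) ∉ O3 := fun h => (hcond3 5 h).1 hhalf
  -- the orbit O2 is contained in {2,4,6,7}
  have hsub2 : ∀ y ∈ O2, y = 2 ∨ y = 4 ∨ y = 6 ∨ y = 7 := by
    intro y hy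
    have hτ := (hcond2 y hy).2
    have h5 : y ≠ 5 := fun h => h5O2 (h ▸ hy)
    have h3 : y ≠ 3 := by
      intro h
      apply h5O2
      have := hτO2 y hy
      rwa [h, t2_3] at this
    by_contra hcon
    push_neg at hcon
    obtain ⟨hc2, hc4, hc6, hc7⟩ := hcon
    exact hτ (tfix2 y hc2 h3 hc4 h5 hc6 hc7)
  -- the orbit O3 is contained in {3,4,6,8}
  have hsub3 : ∀ y ∈ O3, y = 3 ∨ y = 4 ∨ y = 6 ∨ y = 8 := by
    intro y hy
    have hτ := (hcond3 y hy).2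
    have h5 : y ≠ 5 := fun h => h5O3 (h ▸ hy)
    have h7 : y ≠ 7 := by
      intro h
      apply h5O3
      have := hτO3 y hy
      rwa [h, t3_7] at this
    by_contra hcon
    push_neg at hcon
    obtain ⟨hc3, hc4, hc6, hc8⟩ := hcon
    exact hτ (tfix3 y hc3 hc4 h5 hc6 h7 hc8)
  -- apply the combinatorial lemma for i = 2 and i = 3
  have D2 := comb_lemma α (tau 2) O2 2 4 6 7 ne24 ne26 ne46 hα
    (fun y hy => (hcond2 y hy).1) hαO2 hτO2 t2_4 t2_6 t2_7 hsub2
    ⟨x2, MulAction.mem_orbit_self x2⟩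
  have D3 := comb_lemma α (tau 3) O3 3 4 6 8 ne34 ne36 ne46 hα
    (fun y hy => (hcond3 y hy).1) hαO3 hτO3 t3_4 t3_6 t3_8 hsub3
    ⟨x3, MulAction.mem_orbit_self x3⟩
  -- combine
  rcases D2 with hA | hA | ⟨hA1, hA2⟩ | ⟨hA1, hA2⟩
  · rcases D3 with hB | hB | ⟨hB1, hB2⟩ | ⟨hB1, hB2⟩
    · exact Or.inl ⟨hA, hB⟩
    · exact Or.inr (Or.inl hB)
    · exact Or.inr (Or.inr (Or.inr (Or.inr (Or.inl ⟨hA, hB1, hB2⟩))))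
    · exact Or.inr (Or.inr (Or.inr (Or.inr (Or.inr ⟨hA, hB1, hB2⟩))))
  · exact Or.inr (Or.inl hA)
  · rcases D3 with hB | hB | ⟨hB1, hB2⟩ | ⟨hB1, hB2⟩
    · exact Or.inr (Or.inr (Or.inl ⟨hA1, hA2, hB⟩))
    · exact Or.inr (Or.inl hB)
    · -- α 2 = 4 and α 3 = 4 : contradiction
      exfalso
      exact ne23 (α.injective (hA1.trans hB1.symm))
    · -- α 2 = 4 (so α 4 = 2) and α 4 = 8 : contradiction
      exfalso
      apply ne28
      have h4 : α 4 = 2 := by rw [← hA1, hα]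
      rw [← h4, hB2]
  · rcases D3 with hB | hB | ⟨hB1, hB2⟩ | ⟨hB1, hB2⟩
    · exact Or.inr (Or.inr (Or.inr (Or.inl ⟨hA1, hA2, hB⟩)))
    · exact Or.inr (Or.inl hB)
    · -- α 4 = 7 and α 3 = 4 (so α 4 = 3) : contradiction
      exfalso
      apply ne37
      have h4 : α 4 = 3 := by rw [← hB1, hα]
      rw [← h4, hA2]
    · -- α 4 = 7 and α 4 = 8 : contradiction
      exfalso
      exact ne78 (hA2.symm.trans hB2)
end
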